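/- Let g : [0,T] → ℝ be continuously differentiable, let N ≥ 1, τ = T/N, t_k = kτ, and 0 < α < 1. Then the quadrature error γ_α^n = (1/Γ(α)) ∑_{k=1}^n ∫_{t_{k-1}}^{t_k} (t_n - s)^{α-1} (g(s) - g(t_k)) ds satisfies |γ_α^n| ≤ (N^α τ^{α+1} / Γ(α+1)) · sup_{t ∈ [0,T]} |g'(t)| for every 1 ≤ n ≤ N. -/

import Mathlib

open MeasureTheory intervalIntegral

theorem stmt_5 (T : ℝ) (hT : 0 < T) (N : ℕ) (hN : 1 ≤ N) (τ : ℝ) (hτ : τ = T / N)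
    (α : ℝ) (hα0 : 0 < α) (hα1 : α < 1)
    (g g' : ℝ → ℝ)
    (hg : ∀ t ∈ Set.Icc (0 : ℝ) T, HasDerivAt g (g' t) t)
    (hg' : ContinuousOn g' (Set.Icc (0 : ℝ) T))
    (M : ℝ) (hM : ∀ t ∈ Set.Icc (0 : ℝ) T, |g' t| ≤ M) :
    ∀ n : ℕ, 1 ≤ n → n ≤ N →
      |(1 / Real.Gamma α) * ∑ k ∈ Finset.Icc 1 n,
          ∫ s in ((k : ℝ) - 1) * τ..(k : ℝ) * τ,
            ((n : ℝ) * τ - s) ^ (α - 1) * (g s - g ((k : ℝ) * τ))|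
        ≤ (N : ℝ) ^ α * τ ^ (α + 1) / Real.Gamma (α + 1) * M := by
  intro n hn1 hnN
  have hNpos : (0:ℝ) < N := by exact_mod_cast Nat.lt_of_lt_of_le Nat.zero_lt_one hN
  have hτpos : 0 < τ := by rw [hτ]; positivity
  have hNT : (N:ℝ) * τ = T := by rw [hτ]; field_simp
  have hΓpos : 0 < Real.Gamma α := Real.Gamma_pos_of_pos hα0
  have hM0 : 0 ≤ M := le_trans (abs_nonneg _) (hM 0 ⟨le_refl 0, hT.le⟩)
  set c : ℝ := (n:ℝ) * τ with hc
  have hnN' : (n:ℝ) ≤ (N:ℝ) := by exact_mod_cast hnN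
  have hcT : c ≤ T := by rw [← hNT]; exact mul_le_mul_of_nonneg_right hnN' hτpos.le
  have hc0 : 0 ≤ c := by positivity
  have hφint : ∀ a b : ℝ, IntervalIntegrable (fun s => (c - s) ^ (α-1)) volume a b := by
    intro a b
    have h := (intervalIntegrable_rpow' (show (-1:ℝ) < α - 1 by linarith)
      (a := c - a) (b := c - b)).comp_sub_left c
    simpa using h
  have hgc : ContinuousOn g (Set.Icc 0 T) := fun x hx =>
    (hg x hx).continuousAt.continuousWithinAt
  have hlip : ∀ x ∈ Set.Icc (0:ℝ) T, ∀ y ∈ Set.Icc (0:ℝ) T,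
      |g x - g y| ≤ M * |x - y| := by
    intro x hx y hy
    have := (convex_Icc (0:ℝ) T).norm_image_sub_le_of_norm_hasDerivWithin_le
      (f' := g') (fun t ht => (hg t ht).hasDerivWithinAt)
      (fun t ht => by simpa [Real.norm_eq_abs] using hM t ht) hy hx
    simpa [Real.norm_eq_abs] using this
  -- basic facts for k ∈ Icc 1 n
  have hk_ab : ∀ k : ℕ, k ∈ Finset.Icc 1 n →
      (0 ≤ ((k:ℝ)-1)*τ ∧ ((k:ℝ)-1)*τ ≤ (k:ℝ)*τ ∧ (k:ℝ)*τ ≤ c) := by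
    intro k hk
    rw [Finset.mem_Icc] at hk
    obtain ⟨hk1, hkn⟩ := hk
    have h1 : (1:ℝ) ≤ (k:ℝ) := by exact_mod_cast hk1
    have h2 : (k:ℝ) ≤ (n:ℝ) := by exact_mod_cast hkn
    refine ⟨by nlinarith, by nlinarith, by rw [hc]; nlinarith⟩
  have hsub : ∀ k : ℕ, k ∈ Finset.Icc 1 n →
      Set.Icc (((k:ℝ)-1)*τ) ((k:ℝ)*τ) ⊆ Set.Icc (0:ℝ) T := by
    intro k hk x hx
    obtain ⟨h0, hab, hbc⟩ := hk_ab k hk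
    exact ⟨le_trans h0 hx.1, le_trans hx.2 (le_trans hbc hcT)⟩
  -- integrability of the main integrand
  have hfint : ∀ k : ℕ, k ∈ Finset.Icc 1 n →
      IntervalIntegrable (fun s => (c - s) ^ (α-1) * (g s - g ((k:ℝ)*τ)))
        volume (((k:ℝ)-1)*τ) ((k:ℝ)*τ) := by
    intro k hk
    obtain ⟨h0, hab, hbc⟩ := hk_ab k hk
    refine (hφint _ _).mul_continuousOn ?_
    have : Set.uIcc (((k:ℝ)-1)*τ) ((k:ℝ)*τ) = Set.Icc (((k:ℝ)-1)*τ) ((k:ℝ)*τ) :=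
      Set.uIcc_of_le hab
    rw [this]
    exact ((hgc.mono (hsub k hk)).sub continuousOn_const)
  -- the key per-interval bound
  have key : ∀ k : ℕ, k ∈ Finset.Icc 1 n →
      |∫ s in ((k:ℝ)-1)*τ..(k:ℝ)*τ, (c - s) ^ (α-1) * (g s - g ((k:ℝ)*τ))|
        ≤ ∫ s in ((k:ℝ)-1)*τ..(k:ℝ)*τ, M * τ * (c - s) ^ (α-1) := by
    intro k hk
    obtain ⟨h0, hab, hbc⟩ := hk_ab k hk
    have hkT : (k:ℝ)*τ ∈ Set.Icc (0:ℝ) T :=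
      hsub k hk ⟨hab, le_refl _⟩
    calc |∫ s in ((k:ℝ)-1)*τ..(k:ℝ)*τ, (c - s) ^ (α-1) * (g s - g ((k:ℝ)*τ))|
        ≤ ∫ s in ((k:ℝ)-1)*τ..(k:ℝ)*τ, |(c - s) ^ (α-1) * (g s - g ((k:ℝ)*τ))| :=
          intervalIntegral.abs_integral_le_integral_abs hab
      _ ≤ ∫ s in ((k:ℝ)-1)*τ..(k:ℝ)*τ, M * τ * (c - s) ^ (α-1) := by
          refine intervalIntegral.integral_mono_on hab ((hfint k hk).abs)
            ((hφint _ _).const_mul _) ?_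
          intro x hx
          have hx0T : x ∈ Set.Icc (0:ℝ) T := hsub k hk hx
          have hφ0 : 0 ≤ (c - x) ^ (α-1) :=
            Real.rpow_nonneg (by linarith [hx.2]) _
          have hgb : |g x - g ((k:ℝ)*τ)| ≤ M * τ := by
            refine le_trans (hlip x hx0T _ hkT) ?_
            have : |x - (k:ℝ)*τ| ≤ τ := by
              rw [abs_le]; constructor <;> nlinarith [hx.1, hx.2, hτpos.le]
            exact mul_le_mul_of_nonneg_left this hM0
          calc |(c - x) ^ (α-1) * (g x - g ((k:ℝ)*τ))|
              = (c - x) ^ (α-1) * |g x - g ((k:ℝ)*τ)| := by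
                rw [abs_mul, abs_of_nonneg hφ0]
            _ ≤ (c - x) ^ (α-1) * (M * τ) := mul_le_mul_of_nonneg_left hgb hφ0
            _ = M * τ * (c - x) ^ (α-1) := by ring
  -- sum of the φ-integrals telescopes
  have hsum : ∑ k ∈ Finset.Icc 1 n, ∫ s in ((k:ℝ)-1)*τ..(k:ℝ)*τ, (c - s) ^ (α-1)
      = ∫ s in (0:ℝ)..c, (c - s) ^ (α-1) := by
    have hadj := intervalIntegral.sum_integral_adjacent_intervals
      (f := fun s => (c - s) ^ (α-1)) (μ := volume) (a := fun k => (k:ℝ)*τ) (n := n)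
      (fun k _ => hφint _ _)
    rw [← Finset.Ico_add_one_right_eq_Icc, Finset.sum_Ico_eq_sum_range]
    calc ∑ i ∈ Finset.range n,
          ∫ s in (((1+i:ℕ):ℝ)-1)*τ..((1+i:ℕ):ℝ)*τ, (c - s) ^ (α-1)
        = ∑ i ∈ Finset.range n, ∫ s in ((i:ℕ):ℝ)*τ..(((i:ℕ)+1:ℕ):ℝ)*τ, (c - s) ^ (α-1) := by
          refine Finset.sum_congr rfl fun i _ => ?_
          congr 1 <;> push_cast <;> ring
      _ = ∫ s in ((0:ℕ):ℝ)*τ..((n:ℕ):ℝ)*τ, (c - s) ^ (α-1) := by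
          simpa using hadj
      _ = ∫ s in (0:ℝ)..c, (c - s) ^ (α-1) := by norm_num [hc]
  -- value of the full integral
  have hval : ∫ s in (0:ℝ)..c, (c - s) ^ (α-1) = c ^ α / α := by
    rw [intervalIntegral.integral_comp_sub_left (fun x => x ^ (α-1)) c]
    rw [sub_self, sub_zero, integral_rpow (Or.inl (by linarith))]
    rw [sub_add_cancel, Real.zero_rpow hα0.ne']
    ring
  -- now the chain
  have habs : |(1 / Real.Gamma α) * ∑ k ∈ Finset.Icc 1 n,
      ∫ s in ((k:ℝ)-1)*τ..(k:ℝ)*τ, (c - s) ^ (α-1) * (g s - g ((k:ℝ)*τ))|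
      ≤ (1 / Real.Gamma α) * (M * τ * (c ^ α / α)) := by
    rw [abs_mul, abs_of_nonneg (by positivity : (0:ℝ) ≤ 1 / Real.Gamma α)]
    refine mul_le_mul_of_nonneg_left ?_ (by positivity)
    calc |∑ k ∈ Finset.Icc 1 n,
          ∫ s in ((k:ℝ)-1)*τ..(k:ℝ)*τ, (c - s) ^ (α-1) * (g s - g ((k:ℝ)*τ))|
        ≤ ∑ k ∈ Finset.Icc 1 n,
          |∫ s in ((k:ℝ)-1)*τ..(k:ℝ)*τ, (c - s) ^ (α-1) * (g s - g ((k:ℝ)*τ))| :=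
          Finset.abs_sum_le_sum_abs _ _
      _ ≤ ∑ k ∈ Finset.Icc 1 n,
          ∫ s in ((k:ℝ)-1)*τ..(k:ℝ)*τ, M * τ * (c - s) ^ (α-1) :=
          Finset.sum_le_sum key
      _ = M * τ * ∑ k ∈ Finset.Icc 1 n,
          ∫ s in ((k:ℝ)-1)*τ..(k:ℝ)*τ, (c - s) ^ (α-1) := by
          rw [Finset.mul_sum]
          exact Finset.sum_congr rfl fun k _ => intervalIntegral.integral_const_mul _ _
      _ = M * τ * (c ^ α / α) := by rw [hsum, hval]
  refine le_trans habs ?_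
  -- final comparison
  have hcα : c ^ α ≤ (N:ℝ) ^ α * τ ^ α := by
    rw [← Real.mul_rpow hNpos.le hτpos.le]
    exact Real.rpow_le_rpow hc0 (mul_le_mul_of_nonneg_right hnN' hτpos.le) hα0.le
  have hτpow : τ ^ (α+1) = τ ^ α * τ := by
    rw [Real.rpow_add hτpos, Real.rpow_one]
  rw [Real.Gamma_add_one hα0.ne', hτpow]
  have h1 : (1 / Real.Gamma α) * (M * τ * (c ^ α / α))
      = M * τ * c ^ α / (α * Real.Gamma α) := by
    field_simp
    try ring
    try (left; trivial)
  have h2 : (N:ℝ) ^ α * (τ ^ α * τ) / (α * Real.Gamma α) * M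
      = M * τ * ((N:ℝ) ^ α * τ ^ α) / (α * Real.Gamma α) := by ring
  rw [h1, h2]
  apply div_le_div_of_nonneg_right ?_ (by positivity)
  · exact mul_le_mul_of_nonneg_left hcα (by positivity)
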